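/- Let K be a field and n ≥ 2. The localization of the coordinate ring K[SL_n] at the (n−1)-th principal minor Δ_{n-1} is isomorphic to the localization of the polynomial ring K[ξ_{ij} : (i,j) ≠ (n,n)] at Δ_{n-1}; in particular, variables ξ_{nn} can be eliminated using the relation det = 1 once Δ_{n-1} is inverted. -/

import Mathlib

open MvPolynomial

/-- The determinant of the generic `n × n` matrix, as an element of
`K[Mat_n] = K[ξ_{ij}]`. -/
noncomputable def genDet (K : Type*) [CommRing K] (n : ℕ) :
    MvPolynomial (Fin n × Fin n) K :=
  Matrix.det (Matrix.of fun i j : Fin n => X (i, j))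

/-- The `k`-th principal minor `Δ_k` of the generic `n × n` matrix. -/
noncomputable def genDelta (K : Type*) [CommRing K] (n : ℕ) (k : ℕ) (hk : k ≤ n) :
    MvPolynomial (Fin n × Fin n) K :=
  Matrix.det (Matrix.of fun i j : Fin k => X (Fin.castLE hk i, Fin.castLE hk j))

set_option maxHeartbeats 1000000
set_option synthInstance.maxHeartbeats 1000000

open Matrix

namespace SLAux

lemma cofactor_last {R : Type*} [CommRing R] {m : ℕ} (M : Matrix (Fin (m+1)) (Fin (m+1)) R) :
    det (updateRow M (Fin.last m) (Pi.single (Fin.last m) 1)) =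
      det (M.submatrix Fin.castSucc Fin.castSucc) := by
  rw [det_succ_row _ (Fin.last m)]
  rw [Finset.sum_eq_single (Fin.last m)]
  · simp only [updateRow_self, Pi.single_eq_same, Fin.succAbove_last]
    rw [show ((Fin.last m : ℕ) + (Fin.last m : ℕ)) = 2 * m by simp [Fin.val_last]; ring]
    simp only [pow_mul, neg_one_sq, one_pow, one_mul, mul_one]
    congr 1
    ext i j
    simp [updateRow_ne (Fin.castSucc_lt_last i).ne]
  · intro j _ hj
    simp [updateRow_self, Pi.single_eq_of_ne hj]
  · simp

variable (K : Type*) [CommRing K] (m : ℕ)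

/-- the distinguished variable index -/
abbrev pLast : Fin (m+1) × Fin (m+1) := (Fin.last m, Fin.last m)

/-- `det` of the generic matrix with the `(last, last)` entry replaced by `0`. -/
noncomputable def genC : MvPolynomial (Fin (m+1) × Fin (m+1)) K :=
  det (Matrix.of fun i j : Fin (m+1) =>
    if (i, j) = pLast m then 0 else X (i, j))

lemma genDet_decomp :
    genDet K (m+1) = genDelta K (m+1) m (Nat.le_succ m) * X (pLast m) + genC K m := by
  classical
  set R := MvPolynomial (Fin (m+1) × Fin (m+1)) K
  set M : Matrix (Fin (m+1)) (Fin (m+1)) R := Matrix.of fun i j => X (i, j) with hM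
  set M₀ : Matrix (Fin (m+1)) (Fin (m+1)) R := Matrix.of fun i j =>
    if (i, j) = pLast m then 0 else X (i, j) with hM₀
  have hrow : (fun j => M (Fin.last m) j)
      = (fun j => M₀ (Fin.last m) j) + (X (pLast m) : R) • (Pi.single (Fin.last m) 1 : Fin (m+1) → R) := by
    funext j
    by_cases hj : j = Fin.last m
    · subst hj; simp [hM, hM₀]
    · simp [hM, hM₀, Pi.single_eq_of_ne hj, Prod.ext_iff, hj]
  have h1 : genDet K (m+1) = det (updateRow M (Fin.last m) ((fun j => M₀ (Fin.last m) j)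
      + (X (pLast m) : R) • (Pi.single (Fin.last m) 1 : Fin (m+1) → R))) := by
    rw [← hrow]
    simp [genDet, ← hM, updateRow_eq_self]
  rw [h1, det_updateRow_add, det_updateRow_smul, cofactor_last]
  have h2 : M.submatrix Fin.castSucc Fin.castSucc
      = Matrix.of fun i j : Fin m => X (Fin.castLE (Nat.le_succ m) i, Fin.castLE (Nat.le_succ m) j) := rfl
  have h3 : updateRow M (Fin.last m) (fun j => M₀ (Fin.last m) j) = M₀ := by
    ext i j
    by_cases hi : i = Fin.last m
    · subst hi; simp
    · rw [updateRow_ne hi]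
      simp [hM, hM₀, Prod.ext_iff, hi]
  rw [h2, h3, genDelta, genC]
  ring

lemma castLE_ne_last (i : Fin m) : Fin.castLE (Nat.le_succ m) i ≠ Fin.last m := by
  simp only [ne_eq, Fin.ext_iff, Fin.coe_castLE, Fin.val_last]
  exact i.2.ne

/-- The polynomial ring in the variables other than `ξ_{nn}`. -/
abbrev Bring := MvPolynomial {p : Fin (m+1) × Fin (m+1) // p ≠ pLast m} K

/-- `Δ_{n-1}` as an element of `Bring`. -/
noncomputable def dB : Bring K m :=
  Matrix.det (Matrix.of fun i j : Fin m =>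
    (X (⟨(Fin.castLE (Nat.le_succ m) i, Fin.castLE (Nat.le_succ m) j), by
      intro h
      exact castLE_ne_last m i (congrArg Prod.fst h)⟩) : Bring K m))

/-- `genC` as an element of `Bring`. -/
noncomputable def cB : Bring K m :=
  Matrix.det (Matrix.of fun i j : Fin (m+1) =>
    if h : (i, j) = pLast m then 0 else (X ⟨(i, j), h⟩ : Bring K m))

/-- inclusion `Bring → K[Mat]`. -/
noncomputable def incl : Bring K m →ₐ[K] MvPolynomial (Fin (m+1) × Fin (m+1)) K :=
  rename Subtype.val

lemma incl_dB : incl K m (dB K m) = genDelta K (m+1) m (Nat.le_succ m) := by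
  rw [dB, genDelta, AlgHom.map_det]
  refine congrArg det (Matrix.ext fun i j => ?_)
  simp [incl]

lemma incl_cB : incl K m (cB K m) = genC K m := by
  classical
  rw [cB, genC, AlgHom.map_det]
  refine congrArg det (Matrix.ext fun i j => ?_)
  simp only [AlgHom.mapMatrix_apply, Matrix.map_apply, Matrix.of_apply]
  by_cases h : (i, j) = pLast m
  · rw [dif_pos h, if_pos h]; simp
  · rw [dif_neg h, if_neg h]; simp [incl]

noncomputable def Ispan : Ideal (MvPolynomial (Fin (m+1) × Fin (m+1)) K) :=
  Ideal.span {genDet K (m+1) - 1}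

noncomputable def dA : MvPolynomial (Fin (m+1) × Fin (m+1)) K ⧸ Ispan K m :=
  Ideal.Quotient.mk (Ispan K m) (genDelta K (m+1) m (Nat.le_succ m))

noncomputable def f0 : MvPolynomial (Fin (m+1) × Fin (m+1)) K →ₐ[K] Localization.Away (dB K m) :=
  aeval fun p => if h : p = pLast m then
      (1 - algebraMap (Bring K m) (Localization.Away (dB K m)) (cB K m)) *
        IsLocalization.Away.invSelf (dB K m)
    else algebraMap (Bring K m) (Localization.Away (dB K m)) (X ⟨p, h⟩)

lemma f0_incl (b : Bring K m) :
    f0 K m (incl K m b) = algebraMap (Bring K m) (Localization.Away (dB K m)) b := by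
  have h : (f0 K m).comp (incl K m)
      = IsScalarTower.toAlgHom K (Bring K m) (Localization.Away (dB K m)) := by
    apply algHom_ext
    rintro ⟨p, hp⟩
    simp [f0, incl, hp]
  exact AlgHom.congr_fun h b

lemma f0_det : f0 K m (genDet K (m+1)) = 1 := by
  rw [genDet_decomp, map_add, _root_.map_mul, ← incl_dB, ← incl_cB, f0_incl, f0_incl]
  have hX : f0 K m (X (pLast m))
      = (1 - algebraMap (Bring K m) (Localization.Away (dB K m)) (cB K m)) *
          IsLocalization.Away.invSelf (dB K m) := by
    simp [f0]
  rw [hX]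
  linear_combination (1 - algebraMap (Bring K m) (Localization.Away (dB K m)) (cB K m)) *
    IsLocalization.Away.mul_invSelf (S := Localization.Away (dB K m)) (dB K m)

noncomputable def f1 :
    (MvPolynomial (Fin (m+1) × Fin (m+1)) K ⧸ Ispan K m) →ₐ[K] Localization.Away (dB K m) :=
  Ideal.Quotient.liftₐ (Ispan K m) (f0 K m) (by
    intro a ha
    rw [Ispan, Ideal.mem_span_singleton'] at ha
    obtain ⟨x, rfl⟩ := ha
    rw [_root_.map_mul, map_sub, f0_det, _root_.map_one, sub_self, mul_zero])

lemma f1_mk (x : MvPolynomial (Fin (m+1) × Fin (m+1)) K) :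
    f1 K m (Ideal.Quotient.mk (Ispan K m) x) = f0 K m x := by
  rw [f1, Ideal.Quotient.liftₐ_apply]
  rfl

lemma f1_dA : f1 K m (dA K m) = algebraMap _ _ (dB K m) := by
  rw [dA, f1_mk, ← incl_dB, f0_incl]

lemma dB_unit : IsUnit (algebraMap (Bring K m) (Localization.Away (dB K m)) (dB K m)) :=
  IsUnit.of_mul_eq_one _ (IsLocalization.Away.mul_invSelf (S := Localization.Away (dB K m)) (dB K m))

lemma f1_units : ∀ y : Submonoid.powers (dA K m), IsUnit (f1 K m y) := by
  rintro ⟨y, k, rfl⟩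
  simp only [map_pow, f1_dA]
  exact (dB_unit K m).pow k

noncomputable def fwd : Localization.Away (dA K m) →ₐ[K] Localization.Away (dB K m) :=
  IsLocalization.liftAlgHom (S := Localization.Away (dA K m)) (f1_units K m)

lemma fwd_mk (a : MvPolynomial (Fin (m+1) × Fin (m+1)) K ⧸ Ispan K m) :
    fwd K m (algebraMap _ (Localization.Away (dA K m)) a) = f1 K m a := by
  rw [fwd, IsLocalization.liftAlgHom_apply, IsLocalization.lift_eq]
  rfl

noncomputable def h0 : Bring K m →ₐ[K] Localization.Away (dA K m) :=
  aeval fun p : {p : Fin (m+1) × Fin (m+1) // p ≠ pLast m} =>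
    algebraMap (MvPolynomial (Fin (m+1) × Fin (m+1)) K ⧸ Ispan K m)
      (Localization.Away (dA K m)) (Ideal.Quotient.mk (Ispan K m) (X p.1))

lemma h0_eq (b : Bring K m) :
    h0 K m b = algebraMap (MvPolynomial (Fin (m+1) × Fin (m+1)) K ⧸ Ispan K m)
      (Localization.Away (dA K m)) (Ideal.Quotient.mk (Ispan K m) (incl K m b)) := by
  have h : h0 K m = ((IsScalarTower.toAlgHom K _ (Localization.Away (dA K m))).comp
      (Ideal.Quotient.mkₐ K (Ispan K m))).comp (incl K m) := by
    apply algHom_ext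
    rintro ⟨p, hp⟩
    simp [h0, incl]
  rw [AlgHom.congr_fun h b]
  simp only [AlgHom.comp_apply, Ideal.Quotient.mkₐ_eq_mk, IsScalarTower.coe_toAlgHom']

lemma h0_dB : h0 K m (dB K m) = algebraMap (MvPolynomial (Fin (m+1) × Fin (m+1)) K ⧸ Ispan K m)
    (Localization.Away (dA K m)) (dA K m) := by
  rw [h0_eq, incl_dB, dA]

lemma dA_unit :
    IsUnit (algebraMap (MvPolynomial (Fin (m+1) × Fin (m+1)) K ⧸ Ispan K m)
      (Localization.Away (dA K m)) (dA K m)) :=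
  IsUnit.of_mul_eq_one _ (IsLocalization.Away.mul_invSelf (S := Localization.Away (dA K m)) (dA K m))

lemma h0_units : ∀ y : Submonoid.powers (dB K m), IsUnit (h0 K m y) := by
  rintro ⟨y, k, rfl⟩
  simp only [map_pow, h0_dB]
  exact (dA_unit K m).pow k

noncomputable def bwd : Localization.Away (dB K m) →ₐ[K] Localization.Away (dA K m) :=
  IsLocalization.liftAlgHom (A := K) (M := Submonoid.powers (dB K m))
    (S := Localization.Away (dB K m)) (P := Localization.Away (dA K m)) (f := h0 K m)
    (h0_units K m)

lemma bwd_mk (b : Bring K m) :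
    bwd K m (algebraMap _ (Localization.Away (dB K m)) b) = h0 K m b := by
  rw [bwd, IsLocalization.liftAlgHom_apply, IsLocalization.lift_eq]
  rfl

lemma fwd_h0 (b : Bring K m) :
    fwd K m (h0 K m b) = algebraMap (Bring K m) (Localization.Away (dB K m)) b := by
  rw [h0_eq, fwd_mk, f1_mk, f0_incl]

lemma fwd_bwd : (fwd K m).comp (bwd K m) = AlgHom.id K (Localization.Away (dB K m)) := by
  have h : ((fwd K m).comp (bwd K m)).toRingHom = (AlgHom.id K (Localization.Away (dB K m))).toRingHom := by
    apply IsLocalization.ringHom_ext (Submonoid.powers (dB K m))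
    refine RingHom.ext fun b => ?_
    show fwd K m (bwd K m (algebraMap _ _ b)) = algebraMap _ _ b
    rw [bwd_mk, fwd_h0]
  exact AlgHom.ext fun x => RingHom.congr_fun h x

lemma mk_genDet : Ideal.Quotient.mk (Ispan K m) (genDet K (m+1)) = 1 := by
  rw [← map_one (Ideal.Quotient.mk (Ispan K m)), Ideal.Quotient.mk_eq_mk_iff_sub_mem]
  exact Ideal.subset_span rfl

lemma bwd_f1 : (bwd K m).comp (f1 K m)
    = IsScalarTower.toAlgHom K (MvPolynomial (Fin (m+1) × Fin (m+1)) K ⧸ Ispan K m)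
        (Localization.Away (dA K m)) := by
  apply Ideal.Quotient.algHom_ext
  apply algHom_ext
  intro p
  simp only [AlgHom.comp_apply, Ideal.Quotient.mkₐ_eq_mk, IsScalarTower.coe_toAlgHom']
  rw [f1_mk]
  by_cases hp : p = pLast m
  · subst hp
    have hX : f0 K m (X (pLast m))
        = (1 - algebraMap (Bring K m) (Localization.Away (dB K m)) (cB K m)) *
            IsLocalization.Away.invSelf (dB K m) := by
      simp [f0]
    rw [hX]
    set u := algebraMap (MvPolynomial (Fin (m+1) × Fin (m+1)) K ⧸ Ispan K m)
      (Localization.Away (dA K m)) (dA K m) with hu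
    set v := bwd K m (IsLocalization.Away.invSelf (dB K m)) with hv
    set xb := algebraMap (MvPolynomial (Fin (m+1) × Fin (m+1)) K ⧸ Ispan K m)
      (Localization.Away (dA K m)) (Ideal.Quotient.mk (Ispan K m) (X (pLast m))) with hxb
    have hc : bwd K m (algebraMap (Bring K m) (Localization.Away (dB K m)) (cB K m))
        = algebraMap (MvPolynomial (Fin (m+1) × Fin (m+1)) K ⧸ Ispan K m)
            (Localization.Away (dA K m)) (Ideal.Quotient.mk (Ispan K m) (genC K m)) := by
      rw [bwd_mk, h0_eq, incl_cB]
    have huv : u * v = 1 := by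
      have := congrArg (bwd K m)
        (IsLocalization.Away.mul_invSelf (S := Localization.Away (dB K m)) (dB K m))
      rwa [_root_.map_mul, _root_.map_one, bwd_mk, h0_dB] at this
    have hux : u * xb = 1 - algebraMap (MvPolynomial (Fin (m+1) × Fin (m+1)) K ⧸ Ispan K m)
        (Localization.Away (dA K m)) (Ideal.Quotient.mk (Ispan K m) (genC K m)) := by
      have hpoly : genDelta K (m+1) m (Nat.le_succ m) * X (pLast m)
          = genDet K (m+1) - genC K m := by
        linear_combination -1 * genDet_decomp K m
      have hq : dA K m * Ideal.Quotient.mk (Ispan K m) (X (pLast m))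
          = 1 - Ideal.Quotient.mk (Ispan K m) (genC K m) := by
        rw [dA, ← _root_.map_mul, hpoly, map_sub, mk_genDet]
      rw [hu, hxb, ← _root_.map_mul, hq, map_sub, _root_.map_one]
    rw [_root_.map_mul, map_sub, _root_.map_one, hc]
    calc (1 - algebraMap (MvPolynomial (Fin (m + 1) × Fin (m + 1)) K ⧸ Ispan K m)
            (Localization.Away (dA K m)) (Ideal.Quotient.mk (Ispan K m) (genC K m))) * v
        = (u * xb) * v := by rw [hux]
      _ = xb * (u * v) := by ring
      _ = xb := by rw [huv, mul_one]
  · rw [show f0 K m (X p) = algebraMap (Bring K m) (Localization.Away (dB K m)) (X ⟨p, hp⟩) by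
      simp [f0, hp]]
    rw [bwd_mk]
    simp [h0]

lemma bwd_fwd : (bwd K m).comp (fwd K m) = AlgHom.id K (Localization.Away (dA K m)) := by
  have h : ((bwd K m).comp (fwd K m)).toRingHom = (AlgHom.id K (Localization.Away (dA K m))).toRingHom := by
    refine IsLocalization.ringHom_ext (R := MvPolynomial (Fin (m+1) × Fin (m+1)) K ⧸ Ispan K m)
      (M := Submonoid.powers (dA K m)) (S := Localization.Away (dA K m))
      (P := Localization.Away (dA K m)) (RingHom.ext fun a => ?_)
    show bwd K m (fwd K m (algebraMap _ _ a)) = algebraMap _ _ a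
    rw [fwd_mk]
    exact AlgHom.congr_fun (bwd_f1 K m) a
  exact AlgHom.ext fun x => RingHom.congr_fun h x

end SLAux

/-- for a field `K` and `n ≥ 2`, the localization of
`K[SL_n] = K[Mat_n]/(det - 1)` at (the image of) the principal minor `Δ_{n-1}`
is isomorphic, as a `K`-algebra, to the localization of the polynomial ring in the
variables `ξ_{ij}`, `(i,j) ≠ (n,n)`, at `Δ_{n-1}`. -/
theorem stmt0 (K : Type*) [Field K] (n : ℕ) (hn : 2 ≤ n) :
    Nonempty (
      Localization.Away
        (Ideal.Quotient.mk (Ideal.span {genDet K n - 1})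
          (genDelta K n (n - 1) (by omega)))
      ≃ₐ[K]
      Localization.Away
        (Matrix.det (Matrix.of fun i j : Fin (n - 1) =>
          (X (⟨(Fin.castLE (by omega) i, Fin.castLE (by omega) j), by
                intro h
                have hi := i.2
                simp [Prod.ext_iff, Fin.ext_iff] at h
                omega⟩) :
            MvPolynomial
              {p : Fin n × Fin n // p ≠ (⟨n - 1, by omega⟩, ⟨n - 1, by omega⟩)} K)))) := by
  obtain ⟨m, rfl⟩ : ∃ m, n = m + 1 := ⟨n - 1, by omega⟩
  exact ⟨AlgEquiv.ofAlgHom (SLAux.fwd K m) (SLAux.bwd K m) (SLAux.fwd_bwd K m) (SLAux.bwd_fwd K m)⟩
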